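/- Let n ≥ 1, let B be a real symmetric Hurwitz n×n matrix, and let k₁, …, kₙ, kₙ₊₁ ∈ ℝ. Define the (n+1)×(n+1) matrix A by: A i j = B i j − (kᵢ₊₁ * kⱼ₊₁)/exp(kₙ₊₁) for i, j < n (indices written 1-based), A i n = A n i = kᵢ₊₁ for i < n, and A n n = −exp(kₙ₊₁). Then A is a symmetric Hurwitz matrix. -/
import Mathlib


open Matrix

/-- A real square matrix is Hurwitz if every eigenvalue of its complexification
has negative real part. -/
def IsHurwitz {n : ℕ} (M : Matrix (Fin n) (Fin n) ℝ) : Prop :=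
  ∀ μ ∈ spectrum ℂ (M.map (fun x => (x : ℂ))), μ.re < 0

/-- Any element of the complex spectrum of a complex matrix admits an eigenvector. -/
lemma IsHurwitz.exists_eigvec {m : ℕ} (N : Matrix (Fin m) (Fin m) ℂ) {μ : ℂ}
    (hμ : μ ∈ spectrum ℂ N) : ∃ v : Fin m → ℂ, v ≠ 0 ∧ N *ᵥ v = μ • v := by
  rw [← AlgEquiv.spectrum_eq (Matrix.toLinAlgEquiv' : Matrix (Fin m) (Fin m) ℂ ≃ₐ[ℂ] _)] at hμ
  have h := (Module.End.hasEigenvalue_iff_mem_spectrum.mpr hμ).exists_hasEigenvector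
  obtain ⟨v, hv⟩ := h
  refine ⟨v, hv.2, ?_⟩
  have := hv.apply_eq_smul
  simpa [Matrix.toLinAlgEquiv'_apply] using this

/-- The real spectrum lifts to the complex spectrum of the complexification. -/
lemma IsHurwitz.mem_spectrum_complex {m : ℕ} (M : Matrix (Fin m) (Fin m) ℝ) {μ : ℝ}
    (hμ : μ ∈ spectrum ℝ M) : (μ : ℂ) ∈ spectrum ℂ (M.map (fun x => (x : ℂ))) := by
  rw [spectrum.mem_iff] at hμ ⊢
  intro h
  apply hμ
  rw [Matrix.isUnit_iff_isUnit_det] at h ⊢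
  have hmap : ((algebraMap ℝ (Matrix (Fin m) (Fin m) ℝ)) μ - M).map (fun x => (x : ℂ))
      = (algebraMap ℂ (Matrix (Fin m) (Fin m) ℂ)) (μ : ℂ) - M.map (fun x => (x : ℂ)) := by
    ext i j
    simp [Matrix.algebraMap_matrix_apply, Matrix.map_apply, apply_ite]
  have hdet : (((algebraMap ℝ (Matrix (Fin m) (Fin m) ℝ)) μ - M).det : ℂ)
      = ((algebraMap ℂ (Matrix (Fin m) (Fin m) ℂ)) (μ : ℂ) - M.map (fun x => (x : ℂ))).det := by
    rw [← hmap]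
    exact RingHom.map_det Complex.ofRealHom _
  rw [isUnit_iff_ne_zero] at h ⊢
  intro h0
  apply h
  rw [← hdet, h0, Complex.ofReal_zero]

/-- A real matrix whose quadratic form is negative definite is Hurwitz. -/
lemma IsHurwitz.of_negdef {m : ℕ} {M : Matrix (Fin m) (Fin m) ℝ}
    (hneg : ∀ x : Fin m → ℝ, x ≠ 0 → x ⬝ᵥ (M *ᵥ x) < 0) : IsHurwitz M := by
  intro μ hμ
  obtain ⟨v, hv0, hv⟩ := IsHurwitz.exists_eigvec _ hμ
  set a : Fin m → ℝ := fun i => (v i).re with ha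
  set b : Fin m → ℝ := fun i => (v i).im with hb
  have hnonpos : ∀ x : Fin m → ℝ, x ⬝ᵥ (M *ᵥ x) ≤ 0 := by
    intro x
    by_cases hx : x = 0
    · simp [hx]
    · exact (hneg x hx).le
  set c : ℝ := ∑ i, Complex.normSq (v i) with hc
  have hcpos : 0 < c := by
    rw [hc]
    have : ∃ i, v i ≠ 0 := by
      by_contra h
      push_neg at h
      exact hv0 (funext fun i => h i)
    obtain ⟨i, hi⟩ := this
    exact Finset.sum_pos' (fun j _ => Complex.normSq_nonneg _)
      ⟨i, Finset.mem_univ i, Complex.normSq_pos.mpr hi⟩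
  have hdot : star v ⬝ᵥ v = (c : ℂ) := by
    rw [hc]
    push_cast
    simp [dotProduct, Complex.normSq_eq_conj_mul_self]
  have hs : star v ⬝ᵥ ((M.map (fun x => (x : ℂ))) *ᵥ v) = μ * (c : ℂ) := by
    rw [hv, dotProduct_smul, smul_eq_mul, hdot]
  have hre : (star v ⬝ᵥ ((M.map (fun x => (x : ℂ))) *ᵥ v)).re
      = a ⬝ᵥ (M *ᵥ a) + b ⬝ᵥ (M *ᵥ b) := by
    simp only [dotProduct, mulVec, Pi.star_apply, Matrix.map_apply, Complex.re_sum,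
      Finset.mul_sum, Finset.sum_mul]
    rw [← Finset.sum_add_distrib]
    refine Finset.sum_congr rfl fun i _ => ?_
    rw [← Finset.sum_add_distrib]
    refine Finset.sum_congr rfl fun j _ => ?_
    simp only [Complex.star_def, Complex.mul_re, Complex.mul_im, Complex.conj_re,
      Complex.conj_im, Complex.ofReal_re, Complex.ofReal_im, ha, hb]
    ring
  have hab : a ≠ 0 ∨ b ≠ 0 := by
    by_contra h
    push_neg at h
    apply hv0
    funext i
    have h1 := congrFun h.1 i
    have h2 := congrFun h.2 i
    simp only [ha, hb, Pi.zero_apply] at h1 h2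
    exact Complex.ext h1 h2
  have hlt : a ⬝ᵥ (M *ᵥ a) + b ⬝ᵥ (M *ᵥ b) < 0 := by
    rcases hab with h | h
    · have := hneg a h
      have := hnonpos b
      linarith
    · have := hneg b h
      have := hnonpos a
      linarith
  rw [hs] at hre
  have hmul : (μ * (c : ℂ)).re = μ.re * c := by
    simp [Complex.mul_re]
  rw [hmul] at hre
  nlinarith [hcpos, hre ▸ hlt]

/-- A symmetric real Hurwitz matrix has a negative definite quadratic form. -/
lemma IsHurwitz.negdef {m : ℕ} {M : Matrix (Fin m) (Fin m) ℝ} (hsym : M.IsSymm)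
    (hH : IsHurwitz M)
    (x : Fin m → ℝ) (hx : x ≠ 0) : x ⬝ᵥ (M *ᵥ x) < 0 := by
  have hherm : M.IsHermitian := by
    rw [Matrix.IsHermitian, conjTranspose_eq_transpose_of_trivial]
    exact hsym.eq
  have heig : ∀ i, hherm.eigenvalues i < 0 := by
    intro i
    have h1 := hherm.eigenvalues_mem_spectrum_real i
    have h2 := hH _ (IsHurwitz.mem_spectrum_complex _ h1)
    simpa using h2
  set U : Matrix (Fin m) (Fin m) ℝ := (hherm.eigenvectorUnitary : Matrix (Fin m) (Fin m) ℝ)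
    with hU
  set d : Fin m → ℝ := hherm.eigenvalues with hd
  have hspec : M = U * diagonal (RCLike.ofReal ∘ d) * star U := hherm.spectral_theorem
  set y : Fin m → ℝ := star U *ᵥ x with hy
  have hUy : U *ᵥ y = x := by
    rw [hy, mulVec_mulVec, (mem_unitaryGroup_iff).mp hherm.eigenvectorUnitary.2, one_mulVec]
  have hy0 : y ≠ 0 := by
    intro h
    apply hx
    rw [← hUy, h, mulVec_zero]
  have hQ : x ⬝ᵥ (M *ᵥ x) = ∑ i, d i * (y i) ^ 2 := by
    rw [hspec]
    rw [← mulVec_mulVec, ← mulVec_mulVec, dotProduct_mulVec x U]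
    have hxU : x ᵥ* U = y := by
      rw [hy, ← mulVec_transpose, star_eq_conjTranspose, conjTranspose_eq_transpose_of_trivial]
    rw [hxU]
    have : star U *ᵥ x = y := rfl
    rw [this]
    simp [dotProduct, mulVec_diagonal]
    refine Finset.sum_congr rfl fun i _ => ?_
    ring
  rw [hQ]
  have : ∃ i, y i ≠ 0 := by
    by_contra h
    push_neg at h
    exact hy0 (funext fun i => h i)
  obtain ⟨i, hi⟩ := this
  have := Finset.sum_lt_sum (f := fun i => d i * (y i) ^ 2) (g := fun _ => (0 : ℝ))
    (fun j _ => mul_nonpos_of_nonpos_of_nonneg (heig j).le (sq_nonneg _))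
    ⟨i, Finset.mem_univ i, mul_neg_of_neg_of_pos (heig i) (by positivity)⟩
  simpa using this

theorem reconstruction_is_symm_hurwitz
    (n : ℕ) (hn : 1 ≤ n)
    (B : Matrix (Fin n) (Fin n) ℝ)
    (hBsymm : B.IsSymm) (hB : IsHurwitz B)
    (k : Fin (n + 1) → ℝ)
    (A : Matrix (Fin (n + 1)) (Fin (n + 1)) ℝ)
    (hA₁ : ∀ i j : Fin n, A i.castSucc j.castSucc =
      B i j - (k i.castSucc * k j.castSucc) / Real.exp (k (Fin.last n)))
    (hA₂ : ∀ i : Fin n, A i.castSucc (Fin.last n) = k i.castSucc)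
    (hA₃ : ∀ i : Fin n, A (Fin.last n) i.castSucc = k i.castSucc)
    (hA₄ : A (Fin.last n) (Fin.last n) = -Real.exp (k (Fin.last n))) :
    A.IsSymm ∧ IsHurwitz A := by
  have hAsymm : A.IsSymm := by
    apply Matrix.IsSymm.ext
    intro i j
    induction i using Fin.lastCases with
    | last =>
      induction j using Fin.lastCases with
      | last => rfl
      | cast j => rw [hA₂, hA₃]
    | cast i =>
      induction j using Fin.lastCases with
      | last => rw [hA₂, hA₃]
      | cast j => rw [hA₁, hA₁, hBsymm.apply, mul_comm]
  refine ⟨hAsymm, IsHurwitz.of_negdef ?_⟩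
  -- negative definiteness of A
  intro x hx
  set e : ℝ := Real.exp (k (Fin.last n)) with he
  have hepos : 0 < e := Real.exp_pos _
  set v : Fin n → ℝ := fun i => k i.castSucc with hv
  set y : Fin n → ℝ := fun i => x i.castSucc with hy
  set z : ℝ := x (Fin.last n) with hz
  set t : ℝ := ∑ i, y i * v i with ht
  have expand : x ⬝ᵥ (A *ᵥ x) =
      (∑ i, y i * ((∑ j, B i j * y j) - v i / e * t + v i * z)) + z * (t + (-e) * z) := by
    simp only [dotProduct, mulVec]
    rw [Fin.sum_univ_castSucc]
    congr 1
    · refine Finset.sum_congr rfl fun i _ => ?_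
      rw [Fin.sum_univ_castSucc]
      congr 1
      have : ∀ j : Fin n, A i.castSucc j.castSucc * x j.castSucc
          = B i j * y j - v i / e * (y j * v j) := by
        intro j
        rw [hA₁]
        simp only [hy, hv]
        ring
      rw [Finset.sum_congr rfl (fun j _ => this j), Finset.sum_sub_distrib, ← Finset.mul_sum,
        hA₂, ← ht]
    · rw [Fin.sum_univ_castSucc, hA₄]
      have : ∀ j : Fin n, A (Fin.last n) j.castSucc * x j.castSucc = y j * v j := by
        intro j
        rw [hA₃]
        simp only [hy, hv]
        ring
      rw [Finset.sum_congr rfl (fun j _ => this j), ← ht]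
  have expand2 : x ⬝ᵥ (A *ᵥ x) = (y ⬝ᵥ (B *ᵥ y)) - (t - e * z) ^ 2 / e := by
    rw [expand]
    have h1 : ∀ i : Fin n, y i * ((∑ j, B i j * y j) - v i / e * t + v i * z)
        = y i * (∑ j, B i j * y j) + (y i * v i) * (z - t / e) := fun i => by ring
    rw [Finset.sum_congr rfl (fun i _ => h1 i), Finset.sum_add_distrib, ← Finset.sum_mul, ← ht]
    have hSB : y ⬝ᵥ (B *ᵥ y) = ∑ i, y i * (∑ j, B i j * y j) := by
      simp [dotProduct, mulVec, Finset.mul_sum]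
    rw [hSB]
    field_simp
    ring
  rw [expand2]
  by_cases hy0 : y = 0
  · have hz0 : z ≠ 0 := by
      intro h
      apply hx
      funext i
      induction i using Fin.lastCases with
      | last => exact h
      | cast i => exact congrFun hy0 i
    have ht0 : t = 0 := by
      rw [ht, hy0]
      simp
    have hSB0 : y ⬝ᵥ (B *ᵥ y) = 0 := by rw [hy0]; simp
    rw [hSB0, ht0]
    have heq : (0 - e * z) ^ 2 / e = e * z ^ 2 := by
      field_simp
      ring
    rw [heq]
    have hzz : 0 < z ^ 2 := by positivity
    nlinarith [mul_pos hepos hzz]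
  · have h1 := IsHurwitz.negdef hBsymm hB y hy0
    have h2 : 0 ≤ (t - e * z) ^ 2 / e := div_nonneg (sq_nonneg _) hepos.le
    linarith
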